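/- Let X = ∩_{i=1}^q {u_i ≥ 0} ⊂ ℝ^p be a nonempty polyhedron contained in a polyhedron C = ∩_{i=1}^r {v_i ≥ 0} on which the affine symmetric-matrix-valued function θ admits a representation θ(x) = B^0 + Σ_{i=1}^r B^i v_i(x) with all B^i positive semi-definite. Then θ also admits a representation θ(x) = C^0 + Σ_{i=1}^q C^i u_i(x) with all C^i positive semi-definite. -/

import Mathlib

open Matrix

/-- "Independence" of the subfamily of `a` indexed by `s`. -/
def IndepOn {E : Type*} [AddCommGroup E] [Module ℝ E] {m : ℕ} (a : Fin m → E)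
    (s : Finset (Fin m)) : Prop :=
  ∀ g : Fin m → ℝ, (∀ i ∉ s, g i = 0) → ∑ i, g i • a i = 0 → ∀ i, g i = 0

open Finset in
/-- Carathéodory for cones. -/
lemma coneCara {E : Type*} [AddCommGroup E] [Module ℝ E] {m : ℕ} (a : Fin m → E)
    (lam : Fin m → ℝ) (h0 : ∀ i, 0 ≤ lam i) :
    ∃ mu : Fin m → ℝ, (∀ i, 0 ≤ mu i) ∧ ∑ i, mu i • a i = ∑ i, lam i • a i ∧
      IndepOn a (univ.filter (fun i => mu i ≠ 0)) := by
  classical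
  generalize hn : (univ.filter (fun i => lam i ≠ 0)).card = n
  induction n using Nat.strong_induction_on generalizing lam with
  | _ n ih =>
  by_cases hind : IndepOn a (univ.filter (fun i => lam i ≠ 0))
  · exact ⟨lam, h0, rfl, hind⟩
  · simp only [IndepOn, not_forall] at hind
    obtain ⟨g₀, hg0₀, hgsum₀, i₁, hgi₁⟩ := hind
    -- WLOG some coordinate of g is positive
    have key : ∀ g : Fin m → ℝ, (∀ i ∉ univ.filter (fun i => lam i ≠ 0), g i = 0) →
        ∑ i, g i • a i = 0 → (∃ i, 0 < g i) →
        ∃ mu : Fin m → ℝ, (∀ i, 0 ≤ mu i) ∧ ∑ i, mu i • a i = ∑ i, lam i • a i ∧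
          IndepOn a (univ.filter (fun i => mu i ≠ 0)) := by
      rintro g hg0 hgsum ⟨j, hj⟩
      have hne : (univ.filter (fun i => 0 < g i)).Nonempty := ⟨j, by simp [hj]⟩
      obtain ⟨i0, hi0mem, hi0⟩ := (univ.filter (fun i => 0 < g i)).exists_min_image
        (fun i => lam i / g i) hne
      have hgi0 : 0 < g i0 := (mem_filter.1 hi0mem).2
      set t := lam i0 / g i0 with ht
      have ht0 : 0 ≤ t := div_nonneg (h0 i0) hgi0.le
      set mu := fun i => lam i - t * g i with hmu
      have hmu0 : ∀ i, 0 ≤ mu i := by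
        intro i
        rcases le_or_gt (g i) 0 with h | h
        · have : t * g i ≤ 0 := mul_nonpos_of_nonneg_of_nonpos ht0 h
          simp only [hmu]; linarith [h0 i]
        · have h1 : t ≤ lam i / g i := hi0 i (by simp [h])
          have h2 : t * g i ≤ lam i := (le_div_iff₀ h).mp h1
          simp only [hmu]; linarith
      -- support strictly decreases
      have hsub : univ.filter (fun i => mu i ≠ 0) ⊂ univ.filter (fun i => lam i ≠ 0) := by
        constructor
        · intro i hi
          simp only [mem_filter, mem_univ, true_and] at hi ⊢
          intro hli
          apply hi
          have : g i = 0 := hg0 i (by simp [hli])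
          simp [hmu, hli, this]
        · intro hcon
          have hi0in : i0 ∈ univ.filter (fun i => lam i ≠ 0) := by
            by_contra hno
            exact absurd (hg0 i0 hno) hgi0.ne'
          have := hcon hi0in
          simp only [mem_filter, mem_univ, true_and, hmu] at this
          apply this
          rw [ht, div_mul_cancel₀ _ hgi0.ne', sub_self]
      have hcard : (univ.filter (fun i => mu i ≠ 0)).card < n := by
        rw [← hn]; exact card_lt_card hsub
      have hsum : ∑ i, mu i • a i = ∑ i, lam i • a i := by
        simp only [hmu, sub_smul, mul_smul, Finset.sum_sub_distrib, ← Finset.smul_sum, hgsum,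
          smul_zero, sub_zero]
      obtain ⟨nu, h1, h2, h3⟩ := ih _ hcard mu hmu0 rfl
      exact ⟨nu, h1, h2.trans hsum, h3⟩
    rcases lt_or_gt_of_ne hgi₁ with hneg | hpos
    · refine key (fun i => -g₀ i) (fun i hi => by simp [hg0₀ i hi]) ?_ ⟨i₁, by simpa using neg_pos.mpr hneg⟩
      simp only [neg_smul, Finset.sum_neg_distrib, hgsum₀, neg_zero]
    · exact key g₀ hg0₀ hgsum₀ ⟨i₁, hpos⟩


open Finset in
lemma coneClosedPiece {E : Type*} [NormedAddCommGroup E] [NormedSpace ℝ E]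
    {m : ℕ} (a : Fin m → E) (s : Finset (Fin m)) (hs : IndepOn a s) :
    IsClosed {x : E | ∃ lam : Fin m → ℝ, (∀ i, 0 ≤ lam i) ∧ (∀ i ∉ s, lam i = 0) ∧
      x = ∑ i, lam i • a i} := by
  classical
  set L : ({i // i ∈ s} → ℝ) →ₗ[ℝ] E :=
    { toFun := fun g => ∑ i : {i // i ∈ s}, g i • a i
      map_add' := by intro g h; simp [add_smul, Finset.sum_add_distrib]
      map_smul' := by intro c g; simp [smul_smul, Finset.smul_sum]
    } with hL
  have hextend : ∀ g : {i // i ∈ s} → ℝ,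
      ∑ i, (if h : i ∈ s then g ⟨i, h⟩ else 0) • a i = L g := by
    intro g
    rw [show (univ : Finset (Fin m)) = univ from rfl]
    rw [← Finset.sum_subset s.subset_univ (fun i _ hni => by simp [hni])]
    rw [← Finset.sum_attach s (fun i => (if h : i ∈ s then g ⟨i, h⟩ else 0) • a i)]
    simp [hL, Finset.univ_eq_attach]
  have hinj : Function.Injective L := by
    rw [← LinearMap.ker_eq_bot, LinearMap.ker_eq_bot']
    intro g hg
    have h0 : ∀ i, (if h : i ∈ s then g ⟨i, h⟩ else 0) = 0 := by
      apply hs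
      · intro i hi; simp [hi]
      · rw [hextend g, hg]
    funext i
    have := h0 i.1
    simpa [i.2] using this
  have himg : {x : E | ∃ lam : Fin m → ℝ, (∀ i, 0 ≤ lam i) ∧ (∀ i ∉ s, lam i = 0) ∧
      x = ∑ i, lam i • a i} = L '' {g | ∀ i, 0 ≤ g i} := by
    ext x
    constructor
    · rintro ⟨lam, hpos, hsupp, rfl⟩
      refine ⟨fun i => lam i.1, fun i => hpos i.1, ?_⟩
      rw [← hextend]
      congr 1
      funext i
      by_cases h : i ∈ s
      · simp [h]
      · simp [h, hsupp i h]
    · rintro ⟨g, hg, rfl⟩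
      refine ⟨fun i => if h : i ∈ s then g ⟨i, h⟩ else 0, ?_, ?_, (hextend g).symm⟩
      · intro i; by_cases h : i ∈ s
        · simpa [h] using hg ⟨i, h⟩
        · simp [h]
      · intro i hi; simp [hi]
  rw [himg]
  have hclosed : IsClosed {g : {i // i ∈ s} → ℝ | ∀ i, 0 ≤ g i} := by
    have : {g : {i // i ∈ s} → ℝ | ∀ i, 0 ≤ g i} = ⋂ i, {g | 0 ≤ g i} := by
      ext g; simp [Set.mem_iInter]
    rw [this]
    exact isClosed_iInter fun i => isClosed_le continuous_const (continuous_apply i)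
  exact (L.isClosedEmbedding_of_injective (LinearMap.ker_eq_bot.mpr hinj)).isClosedMap _ hclosed

open Finset in
lemma coneClosed {E : Type*} [NormedAddCommGroup E] [NormedSpace ℝ E]
    {m : ℕ} (a : Fin m → E)
    (cara : ∀ lam : Fin m → ℝ, (∀ i, 0 ≤ lam i) →
      ∃ mu : Fin m → ℝ, (∀ i, 0 ≤ mu i) ∧ ∑ i, mu i • a i = ∑ i, lam i • a i ∧
        IndepOn a (univ.filter (fun i => mu i ≠ 0))) :
    IsClosed {x : E | ∃ lam : Fin m → ℝ, (∀ i, 0 ≤ lam i) ∧ x = ∑ i, lam i • a i} := by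
  classical
  have : {x : E | ∃ lam : Fin m → ℝ, (∀ i, 0 ≤ lam i) ∧ x = ∑ i, lam i • a i} =
      ⋃ s ∈ {s : Finset (Fin m) | IndepOn a s},
        {x : E | ∃ lam : Fin m → ℝ, (∀ i, 0 ≤ lam i) ∧ (∀ i ∉ s, lam i = 0) ∧
          x = ∑ i, lam i • a i} := by
    ext x
    simp only [Set.mem_setOf_eq, Set.mem_iUnion]
    constructor
    · rintro ⟨lam, hpos, rfl⟩
      obtain ⟨mu, hmupos, hmusum, hmuind⟩ := cara lam hpos
      exact ⟨univ.filter (fun i => mu i ≠ 0), hmuind, mu, hmupos,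
        fun i hi => by simpa using hi, hmusum.symm⟩
    · rintro ⟨s, _, lam, hpos, _, rfl⟩
      exact ⟨lam, hpos, rfl⟩
  rw [this]
  exact Set.Finite.isClosed_biUnion (Set.toFinite _)
    (fun s hs => coneClosedPiece a s hs)


open scoped InnerProductSpace in
lemma farkasGen {E : Type*} [NormedAddCommGroup E] [InnerProductSpace ℝ E]
    [FiniteDimensional ℝ E] {m : ℕ} (a : Fin m → E) (b : E)
    (h : ∀ y : E, (∀ i, 0 ≤ ⟪a i, y⟫_ℝ) → 0 ≤ ⟪b, y⟫_ℝ) :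
    ∃ lam : Fin m → ℝ, (∀ i, 0 ≤ lam i) ∧ b = ∑ i, lam i • a i := by
  classical
  set S : Set E := {x : E | ∃ lam : Fin m → ℝ, (∀ i, 0 ≤ lam i) ∧ x = ∑ i, lam i • a i}
    with hS
  by_contra hcon
  have hbS : b ∉ S := by
    intro ⟨lam, h1, h2⟩; exact hcon ⟨lam, h1, h2⟩
  set K : ConvexCone ℝ E :=
    { carrier := S
      smul_mem' := by
        rintro c hc x ⟨lam, hpos, rfl⟩
        exact ⟨fun i => c * lam i, fun i => mul_nonneg hc.le (hpos i),
          by simp [Finset.smul_sum, smul_smul]⟩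
      add_mem' := by
        rintro x ⟨lam, hpos, rfl⟩ y ⟨mu, hmupos, rfl⟩
        exact ⟨fun i => lam i + mu i, fun i => add_nonneg (hpos i) (hmupos i),
          by simp [add_smul, Finset.sum_add_distrib]⟩ } with hK
  have hne : (K : Set E).Nonempty := ⟨0, ⟨0, by simp, by simp⟩⟩
  have hcl : IsClosed (K : Set E) := coneClosed a (fun lam h0 => coneCara a lam h0)
  obtain ⟨y, hy1, hy2⟩ :=
    ProperCone.hyperplane_separation'
      (⟨K.toPointedCone (.of_nonempty_of_isClosed hne hcl), hcl⟩ : ProperCone ℝ E) hbS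
  have hay : ∀ i, 0 ≤ ⟪a i, y⟫_ℝ := by
    intro i
    apply hy1
    exact ⟨fun j => if j = i then 1 else 0, fun j => by positivity,
      by simp [Finset.sum_ite_eq']⟩
  have := h y hay
  linarith


open scoped InnerProductSpace
open Matrix in
lemma farkasDot {N m : ℕ} (a : Fin m → (Fin N → ℝ)) (b : Fin N → ℝ)
    (h : ∀ y : Fin N → ℝ, (∀ i, 0 ≤ a i ⬝ᵥ y) → 0 ≤ b ⬝ᵥ y) :
    ∃ lam : Fin m → ℝ, (∀ i, 0 ≤ lam i) ∧ b = ∑ i, lam i • a i := by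
  set e := WithLp.equiv 2 (Fin N → ℝ) with he
  have inner_eq : ∀ u y : EuclideanSpace ℝ (Fin N), ⟪u, y⟫_ℝ = (e u) ⬝ᵥ (e y) := by
    intro u y
    simp only [PiLp.inner_apply, RCLike.inner_apply, conj_trivial, dotProduct]
    exact Finset.sum_congr rfl fun i _ => mul_comm _ _
  have hyp : ∀ y : EuclideanSpace ℝ (Fin N),
      (∀ i, 0 ≤ ⟪e.symm (a i), y⟫_ℝ) → 0 ≤ ⟪e.symm b, y⟫_ℝ := by
    intro y hy
    rw [inner_eq]
    apply h
    intro i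
    have := hy i
    rwa [inner_eq] at this
  obtain ⟨lam, hpos, heq⟩ := farkasGen (fun i => e.symm (a i)) (e.symm b) hyp
  refine ⟨lam, hpos, ?_⟩
  have := congrArg e heq
  simpa [he, WithLp.ofLp_sum] using this


open Matrix

lemma dot_snoc {p : ℕ} (u x : Fin p → ℝ) (c t : ℝ) :
    (Fin.snoc u c : Fin (p+1) → ℝ) ⬝ᵥ (Fin.snoc x t : Fin (p+1) → ℝ) = u ⬝ᵥ x + c * t := by
  simp [dotProduct, Fin.sum_univ_castSucc]

/-- Affine Farkas lemma. -/
lemma affineFarkas {p q : ℕ} (γ : Fin q → Fin p → ℝ) (δ : Fin q → ℝ)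
    (gv : Fin p → ℝ) (dv : ℝ)
    (hne : ∃ x : Fin p → ℝ, ∀ i, 0 ≤ γ i ⬝ᵥ x + δ i)
    (hsub : ∀ x : Fin p → ℝ, (∀ i, 0 ≤ γ i ⬝ᵥ x + δ i) → 0 ≤ gv ⬝ᵥ x + dv) :
    ∃ (lam : Fin q → ℝ) (c : ℝ), (∀ j, 0 ≤ lam j) ∧ 0 ≤ c ∧
      ∀ x : Fin p → ℝ, gv ⬝ᵥ x + dv = ∑ j, lam j * (γ j ⬝ᵥ x + δ j) + c := by
  obtain ⟨x0, hx0⟩ := hne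
  set A : Fin (q+1) → (Fin (p+1) → ℝ) :=
    Fin.snoc (fun j => (Fin.snoc (γ j) (δ j) : Fin (p+1) → ℝ))
      (Fin.snoc (0 : Fin p → ℝ) 1) with hA
  set b : Fin (p+1) → ℝ := Fin.snoc gv dv with hb
  have key : ∀ y : Fin (p+1) → ℝ, (∀ i, 0 ≤ A i ⬝ᵥ y) → 0 ≤ b ⬝ᵥ y := by
    intro y hy
    set x : Fin p → ℝ := Fin.init y with hx
    set t : ℝ := y (Fin.last p) with htt
    have hysnoc : y = Fin.snoc x t := (Fin.snoc_init_self y).symm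
    have ht : 0 ≤ t := by
      have := hy (Fin.last q)
      rw [hysnoc] at this
      simpa [hA, Fin.snoc_last, dot_snoc] using this
    have hcs : ∀ j : Fin q, 0 ≤ γ j ⬝ᵥ x + δ j * t := by
      intro j
      have := hy j.castSucc
      rw [hysnoc] at this
      simpa [hA, Fin.snoc_castSucc, dot_snoc] using this
    rw [hysnoc, hb, dot_snoc]
    rcases eq_or_lt_of_le ht with ht0 | htpos
    · -- t = 0
      rw [← ht0, mul_zero, add_zero]
      by_contra hneg
      push_neg at hneg
      set s : ℝ := (gv ⬝ᵥ x0 + dv + 1) / (-(gv ⬝ᵥ x)) with hs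
      have hgx : gv ⬝ᵥ x < 0 := hneg
      have hnum : 0 < gv ⬝ᵥ x0 + dv + 1 := by
        have := hsub x0 hx0; linarith
      have hspos : 0 < s := div_pos hnum (by linarith)
      have hmem : ∀ j, 0 ≤ γ j ⬝ᵥ (x0 + s • x) + δ j := by
        intro j
        rw [dotProduct_add, dotProduct_smul]
        have h1 := hx0 j
        have h2 := hcs j
        rw [← ht0, mul_zero, add_zero] at h2
        have : 0 ≤ s * (γ j ⬝ᵥ x) := mul_nonneg hspos.le h2
        simp only [smul_eq_mul]
        linarith
      have := hsub _ hmem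
      rw [dotProduct_add, dotProduct_smul] at this
      have hval : s * (gv ⬝ᵥ x) = -(gv ⬝ᵥ x0 + dv + 1) := by
        rw [hs, div_mul_eq_mul_div, mul_div_assoc, div_neg, div_self hgx.ne, mul_neg, mul_one]
      simp only [smul_eq_mul] at this
      rw [hval] at this
      linarith
    · -- t > 0
      have hmem : ∀ j, 0 ≤ γ j ⬝ᵥ (t⁻¹ • x) + δ j := by
        intro j
        rw [dotProduct_smul]
        have := hcs j
        have h2 : 0 ≤ t⁻¹ * (γ j ⬝ᵥ x + δ j * t) := by positivity
        have ht' : t ≠ 0 := htpos.ne'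
        simp only [smul_eq_mul]
        calc (0:ℝ) ≤ t⁻¹ * (γ j ⬝ᵥ x + δ j * t) := h2
          _ = t⁻¹ * (γ j ⬝ᵥ x) + δ j := by field_simp
      have := hsub _ hmem
      rw [dotProduct_smul] at this
      simp only [smul_eq_mul] at this
      have ht' : t ≠ 0 := htpos.ne'
      have := mul_nonneg htpos.le this
      calc (0:ℝ) ≤ t * (t⁻¹ * (gv ⬝ᵥ x) + dv) := this
        _ = gv ⬝ᵥ x + dv * t := by field_simp
  obtain ⟨lam', hpos', heq⟩ := farkasDot A b key
  refine ⟨fun j => lam' j.castSucc, lam' (Fin.last q),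
    fun j => hpos' _, hpos' _, ?_⟩
  intro x
  have h1 : b ⬝ᵥ (Fin.snoc x 1 : Fin (p+1) → ℝ)
      = (∑ i, lam' i • A i) ⬝ᵥ (Fin.snoc x 1 : Fin (p+1) → ℝ) := by rw [← heq]
  rw [show (∑ i, lam' i • A i) ⬝ᵥ (Fin.snoc x 1 : Fin (p+1) → ℝ)
      = ∑ i, (lam' i • A i) ⬝ᵥ (Fin.snoc x 1 : Fin (p+1) → ℝ) by
    simp only [dotProduct, Finset.sum_apply, Finset.sum_mul]; rw [Finset.sum_comm]] at h1
  simp only [smul_dotProduct, smul_eq_mul] at h1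
  rw [Fin.sum_univ_castSucc] at h1
  simp only [hA, hb, Fin.snoc_castSucc, Fin.snoc_last, dot_snoc, zero_dotProduct,
    mul_one, zero_add, one_mul, zero_mul, add_zero] at h1
  convert h1 using 2 <;> simp


open Matrix

lemma psd_smul {p : ℕ} {M : Matrix (Fin p) (Fin p) ℝ} (hM : M.PosSemidef)
    {c : ℝ} (hc : 0 ≤ c) : (c • M).PosSemidef := by
  constructor
  · show (c • M)ᴴ = c • M
    rw [Matrix.conjTranspose_smul, hM.1.eq, star_trivial]
  · intro x
    have h := mul_nonneg hc (hM.2 x)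
    simp only [Matrix.smul_apply, smul_eq_mul, Finsupp.sum, Finset.mul_sum] at h ⊢
    convert h using 3 with i _ j _
    ring

lemma psd_sum {p : ℕ} {ι : Type*} (s : Finset ι) (f : ι → Matrix (Fin p) (Fin p) ℝ)
    (h : ∀ i ∈ s, (f i).PosSemidef) : (∑ i ∈ s, f i).PosSemidef :=
  Finset.sum_induction f _ (fun _ _ ha hb => ha.add hb) Matrix.PosSemidef.zero h

/-- If the nonempty polyhedron `X = ∩ᵢ {uᵢ ≥ 0}` is contained in the polyhedron
`C = ∩ᵢ {vᵢ ≥ 0}` and `θ(x) = B⁰ + ∑ᵢ Bⁱ vᵢ(x)` with all `Bⁱ` positive semi-definite,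
then `θ(x) = C⁰ + ∑ᵢ Cⁱ uᵢ(x)` for some positive semi-definite `Cⁱ`. -/
theorem stmt18 (p q r : ℕ)
    (γ : Fin q → Fin p → ℝ) (δ : Fin q → ℝ)
    (γv : Fin r → Fin p → ℝ) (δv : Fin r → ℝ)
    (hne : ∃ x : Fin p → ℝ, ∀ i, 0 ≤ γ i ⬝ᵥ x + δ i)
    (hsub : ∀ x : Fin p → ℝ, (∀ i, 0 ≤ γ i ⬝ᵥ x + δ i) → ∀ i, 0 ≤ γv i ⬝ᵥ x + δv i)
    (θ : (Fin p → ℝ) → Matrix (Fin p) (Fin p) ℝ)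
    (B0 : Matrix (Fin p) (Fin p) ℝ) (B : Fin r → Matrix (Fin p) (Fin p) ℝ)
    (hB0 : B0.PosSemidef) (hB : ∀ i, (B i).PosSemidef)
    (hθ : ∀ x, θ x = B0 + ∑ i, (γv i ⬝ᵥ x + δv i) • B i) :
    ∃ (C0 : Matrix (Fin p) (Fin p) ℝ) (C : Fin q → Matrix (Fin p) (Fin p) ℝ),
      C0.PosSemidef ∧ (∀ i, (C i).PosSemidef) ∧
      ∀ x, θ x = C0 + ∑ i, (γ i ⬝ᵥ x + δ i) • C i := by
  have hAF : ∀ k : Fin r, ∃ (lam : Fin q → ℝ) (c : ℝ), (∀ j, 0 ≤ lam j) ∧ 0 ≤ c ∧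
      ∀ x : Fin p → ℝ, γv k ⬝ᵥ x + δv k = ∑ j, lam j * (γ j ⬝ᵥ x + δ j) + c :=
    fun k => affineFarkas γ δ (γv k) (δv k) hne (fun x hx => hsub x hx k)
  choose lam c hlam hc hkey using hAF
  refine ⟨B0 + ∑ k, c k • B k, fun j => ∑ k, lam k j • B k, ?_, ?_, ?_⟩
  · exact hB0.add (psd_sum _ _ (fun k _ => psd_smul (hB k) (hc k)))
  · intro j
    exact psd_sum _ _ (fun k _ => psd_smul (hB k) (hlam k j))
  · intro x
    rw [hθ x, add_assoc]
    congr 1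
    have step1 : ∀ k, (γv k ⬝ᵥ x + δv k) • B k
        = (∑ j, (lam k j * (γ j ⬝ᵥ x + δ j)) • B k) + c k • B k := by
      intro k
      rw [hkey k x, add_smul, Finset.sum_smul]
    rw [Finset.sum_congr rfl (fun k _ => step1 k), Finset.sum_add_distrib, add_comm]
    congr 1
    rw [Finset.sum_comm]
    refine Finset.sum_congr rfl (fun j _ => ?_)
    rw [Finset.smul_sum]
    refine Finset.sum_congr rfl (fun k _ => ?_)
    rw [smul_smul, mul_comm]
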